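/- Let Γ ∈ (0,1/2) and set E₊ = 1 + 2√Γ·√(1−Γ) and E₋ = 1 − 2√Γ·√(1−Γ). Then ∫_{E₋}^{E₊} (x−1)² · √((E₊−x)(x−E₋)) / (2πΓx) dx = Γ. -/

import Mathlib

open Real

noncomputable def Gaux (r s t : ℝ) : ℝ :=
  -(Real.sqrt (r^2 - t^2))^3 / 3
  - (t * Real.sqrt (r^2 - t^2) + r^2 * Real.arcsin (t/r)) / 2
  + Real.sqrt (r^2 - t^2) + Real.arcsin (t/r)
  - s * Real.arcsin ((r^2 + t) / (r * (1 + t)))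

lemma Gaux_hasDerivAt (r s t : ℝ) (hr : 0 < r) (hr1 : r < 1) (hs : 0 < s)
    (hrs : s^2 = 1 - r^2) (ht : -r < t) (ht' : t < r) :
    HasDerivAt (Gaux r s) (t^2 * Real.sqrt (r^2 - t^2) / (1 + t)) t := by
  have hq : 0 < r^2 - t^2 := by nlinarith
  have h1t : 0 < 1 + t := by linarith
  set sq := Real.sqrt (r^2 - t^2) with hsqdef
  have hsq : 0 < sq := Real.sqrt_pos.2 hq
  have hsq2 : sq^2 = r^2 - t^2 := Real.sq_sqrt hq.le
  have hq' : HasDerivAt (fun t : ℝ => r^2 - t^2) (-(2*t)) t := by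
    simpa using (hasDerivAt_pow 2 t).const_sub (r^2)
  have hS : HasDerivAt (fun t : ℝ => Real.sqrt (r^2 - t^2)) (-t / sq) t := by
    have := (Real.hasDerivAt_sqrt hq.ne').comp t hq'
    convert this using 1
    · rfl
    · rfl
    · rfl
    rw [← hsqdef]
    field_simp
  -- cube term
  have hA : HasDerivAt (fun t : ℝ => -(Real.sqrt (r^2 - t^2))^3 / 3) (t * sq) t := by
    have := ((hS.pow 3).neg).div_const 3
    convert this using 1
    · rfl
    · rfl
    · rfl
    field_simp
    linear_combination
  -- arcsin (t/r)
  have htr1 : t/r ≠ -1 := by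
    intro h
    rw [div_eq_iff hr.ne'] at h
    linarith
  have htr2 : t/r ≠ 1 := by
    intro h
    rw [div_eq_iff hr.ne'] at h
    linarith
  have harc1 : HasDerivAt (fun t : ℝ => Real.arcsin (t/r)) (1 / sq) t := by
    have hd : HasDerivAt (fun t : ℝ => t/r) (1/r) t := (hasDerivAt_id t).div_const r
    have := (Real.hasDerivAt_arcsin htr1 htr2).comp t hd
    convert this using 1
    · rfl
    · rfl
    · rfl
    have h1 : 1 - (t/r)^2 = (sq/r)^2 := by
      rw [div_pow, div_pow, hsq2]
      field_simp
    rw [h1, Real.sqrt_sq (by positivity)]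
    field_simp
  -- arcsin of u
  set u := (r^2 + t) / (r * (1 + t)) with hudef
  have hden : r * (1 + t) ≠ 0 := by positivity
  have key : (r*(1+t))^2 - (r^2+t)^2 = s^2*(r^2-t^2) := by
    linear_combination (-(r^2-t^2)) * hrs
  have hu2 : 1 - u^2 = s^2*(r^2-t^2)/(r*(1+t))^2 := by
    rw [hudef, div_pow]
    field_simp
    linear_combination key
  have husq : Real.sqrt (1 - u^2) = s * sq / (r * (1 + t)) := by
    have h1 : 1 - u^2 = (s * sq / (r*(1+t)))^2 := by
      rw [hu2, ← hsq2, div_pow, mul_pow s sq 2]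
    rw [h1, Real.sqrt_sq (by positivity)]
  have hu1 : u ≠ -1 ∧ u ≠ 1 := by
    have : 0 < 1 - u^2 := by
      rw [hu2]; positivity
    constructor <;> intro h <;> rw [h] at this <;> norm_num at this
  have hu : HasDerivAt (fun t : ℝ => (r^2 + t) / (r * (1 + t)))
      ((1*(r*(1+t)) - (r^2+t)*(r*1))/(r*(1+t))^2) t := by
    exact HasDerivAt.div ((hasDerivAt_id t).const_add (r^2))
      (((hasDerivAt_id t).const_add 1).const_mul r) hden
  have harcU : HasDerivAt (fun t : ℝ => Real.arcsin ((r^2 + t) / (r * (1 + t))))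
      (s / ((1+t) * sq)) t := by
    have := (Real.hasDerivAt_arcsin hu1.1 hu1.2).comp t hu
    convert this using 1
    · rfl
    · rfl
    · rfl
    have hnum : (1*(r*(1+t)) - (r^2+t)*(r*1)) = r*s^2 := by linear_combination (-r) * hrs
    rw [husq, hnum]
    field_simp
  -- assemble
  have hT : HasDerivAt (fun t : ℝ => t * Real.sqrt (r^2 - t^2)) (1 * sq + t * (-t/sq)) t :=
    (hasDerivAt_id t).mul hS
  have total := ((((hA.sub ((hT.add (harc1.const_mul (r^2))).div_const 2)).add hS).add
    harc1).sub (harcU.const_mul s))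
  rw [show Gaux r s = fun t : ℝ => -(Real.sqrt (r^2 - t^2))^3 / 3
      - (t * Real.sqrt (r^2 - t^2) + r^2 * Real.arcsin (t/r)) / 2
      + Real.sqrt (r^2 - t^2) + Real.arcsin (t/r)
      - s * Real.arcsin ((r^2 + t) / (r * (1 + t))) from rfl]
  convert total using 1
  · rfl
  · rfl
  · rfl
  field_simp
  linear_combination 2 * hrs + (1 - t) * hsq2

/-- With `E± = 1 ± 2√Γ·√(1−Γ)` for `Γ ∈ (0,1/2)`:
`∫_{E₋}^{E₊} (x−1)²·√((E₊−x)(x−E₋))/(2πΓx) dx = Γ`. -/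
theorem stmt_10 (Γ : ℝ) (hΓ : Γ ∈ Set.Ioo (0 : ℝ) (1 / 2))
    (Em Ep : ℝ)
    (hEm : Em = 1 - 2 * Real.sqrt Γ * Real.sqrt (1 - Γ))
    (hEp : Ep = 1 + 2 * Real.sqrt Γ * Real.sqrt (1 - Γ)) :
    ∫ x in Em..Ep,
      (x - 1) ^ 2 * Real.sqrt ((Ep - x) * (x - Em)) / (2 * Real.pi * Γ * x) = Γ := by
  obtain ⟨hΓ0, hΓ2⟩ := hΓ
  have h1Γ : (0:ℝ) < 1 - Γ := by linarith
  set r : ℝ := 2 * Real.sqrt Γ * Real.sqrt (1 - Γ) with hrdef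
  have hr : 0 < r := by
    have h1 := Real.sqrt_pos.2 hΓ0
    have h2 := Real.sqrt_pos.2 h1Γ
    positivity
  have hr2 : r^2 = 4*Γ*(1-Γ) := by
    rw [hrdef, mul_pow, mul_pow, Real.sq_sqrt hΓ0.le, Real.sq_sqrt h1Γ.le]; ring
  have hs : 0 < 1 - 2*Γ := by linarith
  have hrs : (1-2*Γ)^2 = 1 - r^2 := by rw [hr2]; ring
  have hr1 : r < 1 := by nlinarith
  have hEm' : Em = 1 - r := hEm
  have hEp' : Ep = 1 + r := hEp
  have hEmpos : 0 < Em := by rw [hEm']; linarith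
  have hπ : (0:ℝ) < Real.pi := Real.pi_pos
  have hle : Em ≤ Ep := by rw [hEm', hEp']; linarith
  set F : ℝ → ℝ := fun x => Gaux r (1-2*Γ) (x - 1) / (2 * Real.pi * Γ) with hF
  have hderiv : ∀ x ∈ Set.Ioo Em Ep, HasDerivAt F
      ((x - 1)^2 * Real.sqrt ((Ep - x) * (x - Em)) / (2 * Real.pi * Γ * x)) x := by
    intro x hx
    have hx1 : -r < x - 1 := by rw [hEm'] at hx; have := hx.1; linarith
    have hx2 : x - 1 < r := by rw [hEp'] at hx; have := hx.2; linarith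
    have hxpos : 0 < x := lt_trans hEmpos (hEm' ▸ hx.1)
    have hd := (Gaux_hasDerivAt r (1-2*Γ) (x-1) hr hr1 hs hrs hx1 hx2).comp x
      ((hasDerivAt_id x).sub_const 1)
    have hd2 := hd.div_const (2 * Real.pi * Γ)
    have harg : (Ep - x) * (x - Em) = r^2 - (x-1)^2 := by rw [hEm', hEp']; ring
    rw [harg]
    convert hd2 using 1
    · rfl
    · rfl
    · rfl
    have h1x : (1 + (x - 1)) = x := by ring
    rw [h1x, mul_one, div_div, mul_comm x (2*Real.pi*Γ)]
  have hc0 : Continuous fun x : ℝ => Real.sqrt (r^2 - (x-1)^2) :=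
    Real.continuous_sqrt.comp (by continuity)
  have hcarc : Continuous fun x : ℝ => Real.arcsin ((x-1)/r) :=
    Real.continuous_arcsin.comp (by continuity)
  have hcu : ContinuousOn (fun x : ℝ => Real.arcsin ((r^2 + (x-1)) / (r * (1 + (x-1)))))
      (Set.Icc Em Ep) := by
    apply Real.continuous_arcsin.comp_continuousOn
    apply ContinuousOn.div (by fun_prop) (by fun_prop)
    intro x hx
    have hxpos : 0 < x := lt_of_lt_of_le hEmpos hx.1
    rw [show r * (1 + (x-1)) = r * x from by ring]
    positivity
  have hcont : ContinuousOn F (Set.Icc Em Ep) := by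
    apply ContinuousOn.div_const
    show ContinuousOn (fun x => Gaux r (1-2*Γ) (x-1)) (Set.Icc Em Ep)
    simp only [Gaux]
    apply ContinuousOn.sub
    · apply ContinuousOn.add
      apply ContinuousOn.add
      · apply ContinuousOn.sub
        · exact ((hc0.pow 3).neg.div_const 3).continuousOn
        · exact ((((continuous_id.sub continuous_const).mul hc0).add
            (continuous_const.mul hcarc)).div_const 2).continuousOn
      · exact hc0.continuousOn
      · exact hcarc.continuousOn
    · exact ContinuousOn.const_smul hcu (1-2*Γ) |>.congr (fun x _ => by simp [smul_eq_mul])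
  have hint : IntervalIntegrable
      (fun x => (x - 1) ^ 2 * Real.sqrt ((Ep - x) * (x - Em)) / (2 * Real.pi * Γ * x))
      MeasureTheory.volume Em Ep := by
    apply ContinuousOn.intervalIntegrable
    apply ContinuousOn.div (by fun_prop) (by fun_prop)
    intro x hx
    rw [Set.uIcc_of_le hle] at hx
    have hxpos : 0 < x := lt_of_lt_of_le hEmpos hx.1
    positivity
  rw [intervalIntegral.integral_eq_sub_of_hasDerivAt_of_le hle hcont hderiv hint]
  have hGp : Gaux r (1-2*Γ) r
      = -(r^2*(Real.pi/2))/2 + Real.pi/2 - (1-2*Γ)*(Real.pi/2) := by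
    simp only [Gaux, sub_self, Real.sqrt_zero, div_self hr.ne', Real.arcsin_one]
    rw [show (r^2+r)/(r*(1+r)) = 1 from by
      rw [div_eq_one_iff_eq (by positivity)]; ring, Real.arcsin_one]
    ring
  have hGm : Gaux r (1-2*Γ) (-r)
      = -(r^2*(-(Real.pi/2)))/2 + -(Real.pi/2) - (1-2*Γ)*(-(Real.pi/2)) := by
    simp only [Gaux]
    rw [show r^2 - (-r)^2 = 0 from by ring, Real.sqrt_zero,
      show (-r)/r = -1 from by rw [neg_div, div_self hr.ne'],
      Real.arcsin_neg_one,
      show (r^2 + -r)/(r*(1 + -r)) = -1 from by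
        rw [div_eq_iff (by nlinarith : r*(1 + -r) ≠ 0)]; ring,
      Real.arcsin_neg_one]
    ring
  have hEp1 : Ep - 1 = r := by rw [hEp']; ring
  have hEm1 : Em - 1 = -r := by rw [hEm']; ring
  rw [hF]
  simp only [hEp1, hEm1]
  rw [hGp, hGm]
  rw [div_sub_div_same]
  rw [show -(r^2*(Real.pi/2))/2 + Real.pi/2 - (1-2*Γ)*(Real.pi/2)
      - (-(r^2*(-(Real.pi/2)))/2 + -(Real.pi/2) - (1-2*Γ)*(-(Real.pi/2)))
      = Real.pi * (1 - (1-2*Γ)) - Real.pi * r^2/2 from by ring]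
  rw [hr2]
  field_simp
  ring
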